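/- arXiv:1602.05187 — 3 statements merged into one kernel-verified Lean document; each statement's English description precedes it below -/
import Mathlib

section
/- Let L be an n-dimensional Lie algebra over an algebraically closed field F of characteristic zero with n ≥ 2. Suppose that (i) dim[L, L] ≤ n − 2, and (ii) the intersection Z(L) ∩ [L, L] of the center with the derived subalgebra is nontrivial. Then L admits a 2-local automorphism which is not an automorphism; that is, there exists a 2-local automorphism T : L → L for which no Lie algebra automorphism Φ of L satisfies Φ(x) = T(x) for all x ∈ L. -/
/-- A (not necessarily linear) map `T : L → L` is a 2-local automorphism if for every pair
`x, y` there is a Lie algebra automorphism agreeing with `T` at `x` and `y`. -/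
def Is2LocalAut (F : Type*) {L : Type*} [Field F] [LieRing L] [LieAlgebra F L]
    (T : L → L) : Prop :=
  ∀ x y : L, ∃ Φ : L ≃ₗ⁅F⁆ L, Φ x = T x ∧ Φ y = T y

open Classical in
noncomputable def Gfun {F : Type*} [Field F] (u : F × F) : F :=
  if u.2 = 0 then 0 else u.1 ^ 2 / u.2

lemma keyA {F : Type*} [Field F] (u v : F × F) :
    ∃ c : F × F, c.1 * u.1 + c.2 * u.2 = Gfun u ∧ c.1 * v.1 + c.2 * v.2 = Gfun v := by
  obtain ⟨a, b⟩ := u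
  obtain ⟨c, d⟩ := v
  by_cases hdet : a * d - b * c = 0
  · by_cases hb : b = 0
    · by_cases hd : d = 0
      · exact ⟨(0, 0), by simp [Gfun, hb, hd]⟩
      · refine ⟨(0, c ^ 2 / d ^ 2), ?_, ?_⟩
        · simp [Gfun, hb]
        · simp only [Gfun, hd, if_neg, if_false]
          field_simp
          ring
    · refine ⟨(0, a ^ 2 / b ^ 2), ?_, ?_⟩
      · simp only [Gfun, hb, if_neg, if_false]
        field_simp
        ring
      · by_cases hd : d = 0
        · have hc : c = 0 := by
            have : b * c = 0 := by linear_combination -hdet + a * hd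
            rcases mul_eq_zero.1 this with h | h
            · exact absurd h hb
            · exact h
          simp [Gfun, hd, hc]
        · have hc : c = a * d / b := by field_simp; linear_combination -hdet
          simp only [Gfun, hd, if_neg, if_false]
          rw [hc]
          field_simp
          ring
  · set Δ := a * d - b * c with hΔ
    refine ⟨((Gfun (a, b) * d - Gfun (c, d) * b) / Δ,
        (a * Gfun (c, d) - c * Gfun (a, b)) / Δ), ?_, ?_⟩
    · field_simp
      ring
    · field_simp
      ring

section Shift

variable {F : Type*} [Field F] {L : Type*} [LieRing L] [LieAlgebra F L]

/-- The automorphism `x ↦ x + ℓ(x) • z` for a central `z` with `ℓ(z)=0`, `ℓ([x,y])=0`. -/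
noncomputable def shiftAut (ℓ : L →ₗ[F] F) (z : L) (hz : ℓ z = 0)
    (hzc : ∀ x : L, ⁅x, z⁆ = 0) (hℓ : ∀ x y : L, ℓ ⁅x, y⁆ = 0) : L ≃ₗ⁅F⁆ L where
  toFun x := x + ℓ x • z
  map_add' x y := by simp [add_smul]; abel
  map_smul' r x := by simp [smul_smul, smul_add]
  map_lie' {x y} := by
    have h1 : ⁅z, y⁆ = 0 := by rw [← neg_eq_zero, lie_skew]; exact hzc y
    simp [lie_add, add_lie, hzc, h1, hℓ]
  invFun x := x - ℓ x • z
  left_inv x := by simp [hz]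
  right_inv x := by simp [hz]

@[simp] lemma shiftAut_apply (ℓ : L →ₗ[F] F) (z : L) (hz : ℓ z = 0)
    (hzc : ∀ x : L, ⁅x, z⁆ = 0) (hℓ : ∀ x y : L, ℓ ⁅x, y⁆ = 0) (x : L) :
    shiftAut ℓ z hz hzc hℓ x = x + ℓ x • z := rfl

end Shift

/-- An `n`-dimensional Lie algebra (`n ≥ 2`) over an algebraically closed field of
characteristic zero with `dim [L, L] ≤ n - 2` and `Z(L) ∩ [L, L] ≠ 0` admits a 2-local
automorphism which is not an automorphism. -/
theorem exists_two_local_automorphism_not_automorphism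
    (F L : Type*) [Field F] [IsAlgClosed F] [CharZero F]
    [LieRing L] [LieAlgebra F L] [FiniteDimensional F L]
    (n : ℕ) (hn : 2 ≤ n) (hdim : Module.finrank F L = n)
    (hder : Module.finrank F (LieAlgebra.derivedSeries F L 1) ≤ n - 2)
    (hcen : LieAlgebra.center F L ⊓ LieAlgebra.derivedSeries F L 1 ≠ ⊥) :
    ∃ T : L → L, Is2LocalAut F T ∧ ¬ ∃ Φ : L ≃ₗ⁅F⁆ L, ∀ x : L, Φ x = T x := by
  classical
  -- extract a nonzero central element of the derived subalgebra
  obtain ⟨z, hzmem, hzne⟩ : ∃ z : L,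
      z ∈ (LieAlgebra.center F L ⊓ LieAlgebra.derivedSeries F L 1) ∧ z ≠ 0 := by
    by_contra h
    push_neg at h
    exact hcen ((LieSubmodule.eq_bot_iff _).mpr fun m hm => h m hm)
  rw [LieSubmodule.mem_inf] at hzmem
  obtain ⟨hzc', hzD⟩ := hzmem
  have hzc : ∀ x : L, ⁅x, z⁆ = 0 := (LieModule.mem_maxTrivSubmodule F L L z).mp hzc'
  -- brackets lie in the derived subalgebra
  have hD1 : LieAlgebra.derivedSeries F L 1 = ⁅(⊤ : LieIdeal F L), (⊤ : LieIdeal F L)⁆ := by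
    rw [LieAlgebra.derivedSeries_def, LieAlgebra.derivedSeriesOfIdeal_succ,
      LieAlgebra.derivedSeriesOfIdeal_zero]
  have hbr : ∀ x y : L, ⁅x, y⁆ ∈ LieAlgebra.derivedSeries F L 1 := fun x y => by
    rw [hD1]
    exact LieSubmodule.lie_mem_lie (LieSubmodule.mem_top x) (LieSubmodule.mem_top y)
  -- quotient by the derived subalgebra has dimension ≥ 2
  set DS : Submodule F L := (LieAlgebra.derivedSeries F L 1).toSubmodule with hDSdef
  have hq := Submodule.finrank_quotient_add_finrank DS
  have hderDS : Module.finrank F DS ≤ n - 2 := hder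
  have hge : 2 ≤ Module.finrank F (L ⧸ DS) := by omega
  set m := Module.finrank F (L ⧸ DS) with hm
  let bQ : Module.Basis (Fin m) F (L ⧸ DS) := Module.finBasis F (L ⧸ DS)
  let i0 : Fin m := ⟨0, by omega⟩
  let i1 : Fin m := ⟨1, by omega⟩
  have hi : i1 ≠ i0 := by simp [i0, i1, Fin.ext_iff]
  let eQ : L →ₗ[F] (Fin m → F) := bQ.equivFun.toLinearMap ∘ₗ DS.mkQ
  let p : L →ₗ[F] F × F :=
    LinearMap.prod ((LinearMap.proj i0).comp eQ) ((LinearMap.proj i1).comp eQ)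
  have hpD : ∀ w : L, w ∈ LieAlgebra.derivedSeries F L 1 → p w = 0 := by
    intro w hw
    have h0 : DS.mkQ w = 0 := (Submodule.Quotient.mk_eq_zero _).mpr hw
    have h1 : eQ w = 0 := by
      show bQ.equivFun (DS.mkQ w) = 0
      rw [h0, map_zero]
    show ((LinearMap.proj i0).comp eQ w, (LinearMap.proj i1).comp eQ w) = (0 : F × F)
    simp [h1]
  -- preimages of (1,0) and (0,1)
  obtain ⟨x₁, hx₁⟩ := DS.mkQ_surjective (bQ.equivFun.symm (Pi.single i0 1))
  obtain ⟨x₂, hx₂⟩ := DS.mkQ_surjective (bQ.equivFun.symm (Pi.single i1 1))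
  have he1 : eQ x₁ = Pi.single i0 1 := by
    show bQ.equivFun (DS.mkQ x₁) = _
    rw [hx₁, LinearEquiv.apply_symm_apply]
  have he2 : eQ x₂ = Pi.single i1 1 := by
    show bQ.equivFun (DS.mkQ x₂) = _
    rw [hx₂, LinearEquiv.apply_symm_apply]
  have hp1 : p x₁ = (1, 0) := by
    show (eQ x₁ i0, eQ x₁ i1) = ((1 : F), (0 : F))
    rw [he1, Pi.single_eq_same, Pi.single_eq_of_ne hi]
  have hp2 : p x₂ = (0, 1) := by
    show (eQ x₂ i0, eQ x₂ i1) = ((0 : F), (1 : F))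
    rw [he2, Pi.single_eq_same, Pi.single_eq_of_ne hi.symm]
  -- the functional associated to c : F × F
  let ℓ : F × F → (L →ₗ[F] F) := fun c =>
    c.1 • ((LinearMap.fst F F F).comp p) + c.2 • ((LinearMap.snd F F F).comp p)
  have hℓ_apply : ∀ c : F × F, ∀ x : L, ℓ c x = c.1 * (p x).1 + c.2 * (p x).2 := by
    intro c x; simp [ℓ]
  have hℓz : ∀ c : F × F, ℓ c z = 0 := by
    intro c; rw [hℓ_apply, hpD z hzD]; simp
  have hℓbr : ∀ c : F × F, ∀ x y : L, ℓ c ⁅x, y⁆ = 0 := by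
    intro c x y; rw [hℓ_apply, hpD _ (hbr x y)]; simp
  -- the 2-local automorphism
  refine ⟨fun x => x + Gfun (p x) • z, ?_, ?_⟩
  · intro x y
    obtain ⟨c, h1, h2⟩ := keyA (p x) (p y)
    refine ⟨shiftAut (ℓ c) z (hℓz c) hzc (hℓbr c), ?_, ?_⟩
    · simp only [shiftAut_apply]
      rw [hℓ_apply, h1]
    · simp only [shiftAut_apply]
      rw [hℓ_apply, h2]
  · rintro ⟨Φ, hΦ⟩
    have hΦ' : ∀ x : L, Φ x = x + Gfun (p x) • z := hΦ
    have hadd : Φ (x₁ + x₂) = Φ x₁ + Φ x₂ := Φ.toLinearEquiv.map_add x₁ x₂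
    have hpsum : p (x₁ + x₂) = (1, 1) := by
      rw [map_add, hp1, hp2]; simp [Prod.ext_iff]
    rw [hΦ' (x₁ + x₂), hΦ' x₁, hΦ' x₂, hpsum, hp1, hp2] at hadd
    have hG11 : Gfun ((1 : F), (1 : F)) = 1 := by simp [Gfun]
    have hG10 : Gfun ((1 : F), (0 : F)) = 0 := by simp [Gfun]
    have hG01 : Gfun ((0 : F), (1 : F)) = 0 := by simp [Gfun]
    rw [hG11, hG10, hG01] at hadd
    simp only [one_smul, zero_smul, add_zero] at hadd
    have hz0 : z = 0 := by
      have h := hadd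
      rwa [add_assoc, add_right_inj, add_eq_left] at h
    exact hzne hz0
end

section
/- Let L be a finite-dimensional nilpotent Lie algebra over an algebraically closed field F of characteristic zero with dim L ≥ 2. Then L admits a 2-local automorphism which is not an automorphism; that is, there exists a 2-local automorphism T : L → L for which no Lie algebra automorphism Φ of L satisfies Φ(x) = T(x) for all x ∈ L. -/
open Module

section helpers
variable {K V : Type*} [Field K] [AddCommGroup V] [Module K V]

lemma exists_dual_sep {x y : V} (h : x ∉ Submodule.span K {y}) :
    ∃ f : V →ₗ[K] K, f x = 1 ∧ f y = 0 := by
  set p := Submodule.span K {y} with hp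
  have hx : p.mkQ x ≠ 0 := by
    simpa [Submodule.mkQ_apply, Submodule.Quotient.mk_eq_zero] using h
  obtain ⟨φ, hφ⟩ : ∃ φ : Module.Dual K (V ⧸ p), φ (p.mkQ x) ≠ 0 := by
    by_contra hc
    push_neg at hc
    exact hx ((Module.forall_dual_apply_eq_zero_iff K _).mp hc)
  have hy : p.mkQ y = 0 := by
    simp [Submodule.mkQ_apply, Submodule.Quotient.mk_eq_zero, hp,
      Submodule.mem_span_singleton_self]
  refine ⟨(φ (p.mkQ x))⁻¹ • (φ.comp p.mkQ), ?_, ?_⟩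
  · simp only [LinearMap.smul_apply, LinearMap.comp_apply, smul_eq_mul]
    exact inv_mul_cancel₀ hφ
  · simp [hy]

lemma exists_dual_ne {x : V} (h : x ≠ 0) : ∃ f : V →ₗ[K] K, f x = 1 := by
  have : x ∉ Submodule.span K {(0 : V)} := by
    simpa [Submodule.span_zero_singleton] using h
  obtain ⟨f, hf, -⟩ := exists_dual_sep this
  exact ⟨f, hf⟩



lemma exists_nonadditive_interp [FiniteDimensional K V] (hd : 2 ≤ finrank K V) :
    ∃ h : V → K, (∀ u v : V, ∃ f : V →ₗ[K] K, f u = h u ∧ f v = h v) ∧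
      ∃ u v : V, h (u + v) ≠ h u + h v := by
  classical
  set n := finrank K V with hn
  let b : Basis (Fin n) K V := finBasis K V
  have h0 : (0 : ℕ) < n := by omega
  have h1 : (1 : ℕ) < n := by omega
  set i0 : Fin n := ⟨0, h0⟩
  set i1 : Fin n := ⟨1, h1⟩
  set c0 : V →ₗ[K] K := b.coord i0 with hc0
  set c1 : V →ₗ[K] K := b.coord i1 with hc1
  set h : V → K := fun u => if c1 u = 0 then 0 else (c0 u) ^ 2 / (c1 u) with hh
  have hzero : h 0 = 0 := by simp [hh]
  have hhom : ∀ (t : K) (u : V), h (t • u) = t * h u := by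
    intro t u
    rcases eq_or_ne t 0 with rfl | ht
    · simp [hzero]
    · by_cases hu : c1 u = 0
      · simp [hh, hu, map_smul, smul_eq_mul]
      · have hc1' : c1 (t • u) = t * c1 u := by simp [map_smul]
        have hc0' : c0 (t • u) = t * c0 u := by simp [map_smul]
        have : c1 (t • u) ≠ 0 := by simp [hc1', ht, hu]
        simp only [hh, if_neg hu, if_neg this, hc0', hc1']
        field_simp
  refine ⟨h, ?_, ?_⟩
  · intro u v
    by_cases huv : u ∈ Submodule.span K {v}
    · obtain ⟨t, rfl⟩ := Submodule.mem_span_singleton.mp huv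
      rcases eq_or_ne v 0 with rfl | hv0
      · refine ⟨(0 : V →ₗ[K] K), by rw [smul_zero, hzero]; simp, by rw [hzero]; simp⟩
      · obtain ⟨f₀, hf₀⟩ := exists_dual_ne (K := K) hv0
        refine ⟨h v • f₀, ?_, by simp [hf₀]⟩
        rw [hhom]
        simp [map_smul, hf₀, smul_eq_mul, mul_comm]
    · by_cases hvu : v ∈ Submodule.span K {u}
      · obtain ⟨t, rfl⟩ := Submodule.mem_span_singleton.mp hvu
        have hu0 : u ≠ 0 := by
          rintro rfl; exact huv (by simp)
        obtain ⟨f₀, hf₀⟩ := exists_dual_ne (K := K) hu0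
        refine ⟨h u • f₀, by simp [hf₀], ?_⟩
        rw [hhom]
        simp [map_smul, hf₀, smul_eq_mul, mul_comm]
      · obtain ⟨f₁, hf₁u, hf₁v⟩ := exists_dual_sep huv
        obtain ⟨f₂, hf₂v, hf₂u⟩ := exists_dual_sep hvu
        refine ⟨h u • f₁ + h v • f₂, ?_, ?_⟩ <;>
          simp [hf₁u, hf₁v, hf₂u, hf₂v]
  · refine ⟨b i0, b i1, ?_⟩
    have e00 : c0 (b i0) = 1 := by simp [hc0]
    have e10 : c1 (b i0) = 0 := by
      simp [hc1, Basis.coord_apply, Finsupp.single_apply, show i0 ≠ i1 by simp [i0, i1, Fin.ext_iff]]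
    have e01 : c0 (b i1) = 0 := by
      simp [hc0, Basis.coord_apply, Finsupp.single_apply, show i1 ≠ i0 by simp [i0, i1, Fin.ext_iff]]
    have e11 : c1 (b i1) = 1 := by simp [hc1]
    have eadd0 : c0 (b i0 + b i1) = 1 := by simp [map_add, e00, e01]
    have eadd1 : c1 (b i0 + b i1) = 1 := by simp [map_add, e10, e11]
    simp [hh, e10, e11, e01, eadd0, eadd1]

end helpers

section lie
variable {F L : Type*} [Field F] [LieRing L] [LieAlgebra F L]

lemma exists_lieEquiv_shift (z : L) (hz : ∀ w : L, ⁅w, z⁆ = 0) (f : L →ₗ[F] F)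
    (hfb : ∀ x y : L, f ⁅x, y⁆ = 0) (hc : 1 + f z ≠ 0) :
    ∃ Φ : L ≃ₗ⁅F⁆ L, ∀ x, Φ x = x + f x • z := by
  set N : L →ₗ[F] L := f.smulRight z with hN
  have hNapp : ∀ x, N x = f x • z := fun x => rfl
  have hNN : ∀ x, N (N x) = (f z * f x) • z := by
    intro x
    simp [hNapp, map_smul, smul_smul, mul_comm]
  set a : F := (1 + f z)⁻¹ with ha
  have key1 : ∀ x : L, (x + N x) - a • N (x + N x) = x := by
    intro x
    have h1 : N (x + N x) = (1 + f z) • N x :=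
      calc N (x + N x) = N x + (f z * f x) • z := by rw [map_add, hNN]
      _ = (f x + f z * f x) • z := by rw [hNapp, ← add_smul]
      _ = ((1 + f z) * f x) • z := by ring_nf
      _ = (1 + f z) • N x := by rw [hNapp, smul_smul]
    rw [h1, smul_smul, ha, inv_mul_cancel₀ hc, one_smul]
    abel
  have key2 : ∀ x : L, (x - a • N x) + N (x - a • N x) = x := by
    intro x
    have h1 : N (x - a • N x) = (1 - a * f z) • N x :=
      calc N (x - a • N x) = N x - a • (f z * f x) • z := by rw [map_sub, map_smul, hNN]
      _ = (f x - a * (f z * f x)) • z := by rw [hNapp, smul_smul, ← sub_smul]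
      _ = ((1 - a * f z) * f x) • z := by ring_nf
      _ = (1 - a * f z) • N x := by rw [hNapp, smul_smul]
    rw [h1]
    have h2 : (1 : F) - a * f z = a := by
      rw [ha]
      field_simp
      ring
    rw [h2]
    abel
  set Φlin : L →ₗ[F] L := LinearMap.id + N with hΦlin
  set Ψlin : L →ₗ[F] L := LinearMap.id - a • N with hΨlin
  have hΦapp : ∀ x, Φlin x = x + N x := fun x => rfl
  have hΨapp : ∀ x, Ψlin x = x - a • N x := fun x => rfl
  refine ⟨⟨⟨⟨Φlin.toAddHom, Φlin.map_smul'⟩, ?_⟩, Ψlin, ?_, ?_⟩, ?_⟩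
  · intro x y
    show Φlin ⁅x, y⁆ = ⁅Φlin x, Φlin y⁆
    have hzl : ∀ w : L, ⁅z, w⁆ = 0 := by
      intro w
      rw [← neg_eq_zero, ← lie_skew, hz]; simp
    rw [hΦapp, hΦapp, hΦapp, hNapp, hNapp, hNapp, hfb]
    simp [lie_add, add_lie, lie_smul, smul_lie, hz, hzl, neg_neg, neg_zero]
  · intro x
    show Ψlin (Φlin x) = x
    rw [hΨapp, hΦapp]
    exact key1 x
  · intro x
    show Φlin (Ψlin x) = x
    rw [hΦapp, hΨapp]
    exact key2 x
  · intro x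
    show Φlin x = x + f x • z
    rw [hΦapp, hNapp]

end lie


/-- Every finite-dimensional nilpotent Lie algebra of dimension at least 2 over an
algebraically closed field of characteristic zero admits a 2-local automorphism which is not
an automorphism. -/
theorem nilpotent_exists_two_local_automorphism_not_automorphism
    (F L : Type*) [Field F] [IsAlgClosed F] [CharZero F]
    [LieRing L] [LieAlgebra F L] [FiniteDimensional F L]
    [LieRing.IsNilpotent L]
    (hdim : 2 ≤ Module.finrank F L) :
    ∃ T : L → L, Is2LocalAut F T ∧ ¬ ∃ Φ : L ≃ₗ⁅F⁆ L, ∀ x : L, Φ x = T x := by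
  classical
  have hnt : Nontrivial L := by
    have h0 : 0 < finrank F L := by omega
    exact Module.nontrivial_of_finrank_pos h0
  by_cases habel : ∀ a b : L, ⁅a, b⁆ = (0 : L)
  · -- abelian case
    obtain ⟨z, hz0⟩ := exists_ne (0 : L)
    set P : L → Prop := fun x => ∃ c : F, x = c • z with hP
    set T : L → L := fun x => if h : P x then x + Classical.choose h • z else x with hT
    have hT_in : ∀ (x : L) (c : F), x = c • z → T x = x + c • z := by
      intro x c hc
      have hPx : P x := ⟨c, hc⟩
      have hspec : x = Classical.choose hPx • z := Classical.choose_spec hPx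
      have hcc : Classical.choose hPx = c := by
        have h2 : Classical.choose hPx • z = c • z := hspec.symm.trans hc
        exact smul_left_injective F hz0 h2
      simp only [hT]
      rw [dif_pos hPx, hcc]
    have hT_out : ∀ x : L, ¬ P x → T x = x := fun x hx => dif_neg hx
    have hzc : ∀ w : L, ⁅w, z⁆ = 0 := fun w => habel w z
    refine ⟨T, ?_, ?_⟩
    · intro x y
      have finish : ∀ f : L →ₗ[F] F, 1 + f z ≠ 0 → x + f x • z = T x → y + f y • z = T y →
          ∃ Φ : L ≃ₗ⁅F⁆ L, Φ x = T x ∧ Φ y = T y := by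
        intro f hc h1 h2
        have hfb : ∀ a b : L, f ⁅a, b⁆ = 0 := by intro a b; rw [habel a b, map_zero]
        obtain ⟨Φ, hΦ⟩ := exists_lieEquiv_shift z hzc f hfb hc
        exact ⟨Φ, by rw [hΦ x, h1], by rw [hΦ y, h2]⟩
      by_cases hx : P x <;> by_cases hy : P y
      · obtain ⟨c, hcx⟩ := hx
        obtain ⟨c', hcy⟩ := hy
        obtain ⟨f, hfz⟩ := exists_dual_ne (K := F) hz0
        refine finish f ?_ ?_ ?_
        · rw [hfz]; norm_num
        · have hfx : f x = c := by rw [hcx, map_smul, hfz, smul_eq_mul, mul_one]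
          rw [hfx, hT_in x c hcx]
        · have hfy : f y = c' := by rw [hcy, map_smul, hfz, smul_eq_mul, mul_one]
          rw [hfy, hT_in y c' hcy]
      · obtain ⟨c, hcx⟩ := hx
        have hzy : z ∉ Submodule.span F {y} := by
          intro hmem
          obtain ⟨t, ht⟩ := Submodule.mem_span_singleton.mp hmem
          have ht0 : t ≠ 0 := by
            rintro rfl
            rw [zero_smul] at ht
            exact hz0 ht.symm
          exact hy ⟨t⁻¹, by rw [← ht, smul_smul, inv_mul_cancel₀ ht0, one_smul]⟩
        obtain ⟨f, hfz, hfy⟩ := exists_dual_sep hzy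
        refine finish f ?_ ?_ ?_
        · rw [hfz]; norm_num
        · have hfx : f x = c := by rw [hcx, map_smul, hfz, smul_eq_mul, mul_one]
          rw [hfx, hT_in x c hcx]
        · rw [hfy, zero_smul, add_zero, hT_out y hy]
      · obtain ⟨c, hcy⟩ := hy
        have hzx : z ∉ Submodule.span F {x} := by
          intro hmem
          obtain ⟨t, ht⟩ := Submodule.mem_span_singleton.mp hmem
          have ht0 : t ≠ 0 := by
            rintro rfl
            rw [zero_smul] at ht
            exact hz0 ht.symm
          exact hx ⟨t⁻¹, by rw [← ht, smul_smul, inv_mul_cancel₀ ht0, one_smul]⟩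
        obtain ⟨f, hfz, hfx⟩ := exists_dual_sep hzx
        refine finish f ?_ ?_ ?_
        · rw [hfz]; norm_num
        · rw [hfx, zero_smul, add_zero, hT_out x hx]
        · have hfy : f y = c := by rw [hcy, map_smul, hfz, smul_eq_mul, mul_one]
          rw [hfy, hT_in y c hcy]
      · refine finish 0 ?_ ?_ ?_
        · rw [LinearMap.zero_apply]; norm_num
        · rw [LinearMap.zero_apply, zero_smul, add_zero, hT_out x hx]
        · rw [LinearMap.zero_apply, zero_smul, add_zero, hT_out y hy]
    · rintro ⟨Φ, hΦ⟩
      obtain ⟨y, hy⟩ : ∃ y : L, ¬ P y := by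
        by_contra hall
        push_neg at hall
        have hle : finrank F L ≤ 1 := by
          refine finrank_le_one z (fun w => ?_)
          obtain ⟨c, hc⟩ := hall w
          exact ⟨c, hc.symm⟩
        omega
      have hTz : T z = z + z := by
        have := hT_in z 1 (one_smul F z).symm
        rwa [one_smul] at this
      have hTy : T y = y := hT_out y hy
      have hPzy : ¬ P (z + y) := by
        rintro ⟨c, hc⟩
        refine hy ⟨c - 1, ?_⟩
        rw [sub_smul, ← hc, one_smul]
        abel
      have hTzy : T (z + y) = z + y := hT_out _ hPzy
      have hadd : Φ (z + y) = Φ z + Φ y := map_add Φ.toLieHom z y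
      have hzz : z + y = z + z + y := by
        conv_lhs => rw [← hTzy, ← hΦ, hadd, hΦ, hΦ, hTz, hTy]
      have hz' : z = z + z := add_right_cancel hzz
      exact hz0 (left_eq_add.mp hz')
  · -- nonabelian case
    have habel' : ¬ LieModule.IsTrivial L L := by
      intro h
      exact habel fun a b => h.trivial a b
    haveI := LieModule.nontrivial_lowerCentralSeriesLast F L L
    obtain ⟨zS, hzS⟩ := exists_ne (0 : LieModule.lowerCentralSeriesLast F L L)
    set z : L := (zS : L) with hzdef
    have hz0 : z ≠ 0 := by
      intro h
      exact hzS (Subtype.ext h)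
    have hzmax : z ∈ LieModule.maxTrivSubmodule F L L :=
      LieModule.lowerCentralSeriesLast_le_max_triv (R := F) (L := L) (M := L) zS.2
    have hzc : ∀ w : L, ⁅w, z⁆ = 0 := (LieModule.mem_maxTrivSubmodule F L L z).mp hzmax
    have hzD : z ∈ LieModule.lowerCentralSeries F L L 1 :=
      LieModule.lowerCentralSeriesLast_le_of_not_isTrivial F L L habel' zS.2
    set D : Submodule F L := ((LieModule.lowerCentralSeries F L L 1 : LieSubmodule F L L) : Submodule F L) with hD
    have h1 : LieModule.lowerCentralSeries F L L 1
        = ⁅(⊤ : LieIdeal F L), (⊤ : LieSubmodule F L L)⁆ := by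
      rw [show (1 : ℕ) = 0 + 1 from rfl, LieModule.lowerCentralSeries_succ,
        LieModule.lowerCentralSeries_zero]
    have hbr : ∀ a b : L, ⁅a, b⁆ ∈ LieModule.lowerCentralSeries F L L 1 := by
      intro a b
      rw [h1]
      exact LieSubmodule.lie_mem_lie (LieSubmodule.mem_top a) (LieSubmodule.mem_top b)
    have hbrD : ∀ a b : L, ⁅a, b⁆ ∈ D := fun a b => (LieSubmodule.mem_toSubmodule _).mpr (hbr a b)
    have hqbr : ∀ a b : L, D.mkQ ⁅a, b⁆ = 0 := by
      intro a b
      rw [Submodule.mkQ_apply, Submodule.Quotient.mk_eq_zero]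
      exact hbrD a b
    have hqz : D.mkQ z = 0 := by
      rw [Submodule.mkQ_apply, Submodule.Quotient.mk_eq_zero]
      exact (LieSubmodule.mem_toSubmodule _).mpr hzD
    have hdimV : 2 ≤ finrank F (L ⧸ D) := by
      by_contra hcon
      push_neg at hcon
      have hle1 : finrank F (L ⧸ D) ≤ 1 := by omega
      obtain ⟨v, hv⟩ := finrank_le_one_iff.mp hle1
      obtain ⟨a₀, ha₀⟩ := Submodule.mkQ_surjective D v
      have claim : LieModule.lowerCentralSeries F L L 1 ≤ LieModule.lowerCentralSeries F L L 2 := by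
        rw [h1, show (2 : ℕ) = 1 + 1 from rfl, LieModule.lowerCentralSeries_succ]
        rw [LieSubmodule.lie_le_iff]
        intro x _ m _
        obtain ⟨c, hc⟩ := hv (D.mkQ x)
        obtain ⟨c', hc'⟩ := hv (D.mkQ m)
        have hdx : x - c • a₀ ∈ LieModule.lowerCentralSeries F L L 1 := by
          have hq : D.mkQ (x - c • a₀) = 0 := by rw [map_sub, map_smul, ha₀, hc, sub_self]
          rw [Submodule.mkQ_apply, Submodule.Quotient.mk_eq_zero] at hq
          exact (LieSubmodule.mem_toSubmodule _).mp hq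
        have hdm : m - c' • a₀ ∈ LieModule.lowerCentralSeries F L L 1 := by
          have hq : D.mkQ (m - c' • a₀) = 0 := by rw [map_sub, map_smul, ha₀, hc', sub_self]
          rw [Submodule.mkQ_apply, Submodule.Quotient.mk_eq_zero] at hq
          exact (LieSubmodule.mem_toSubmodule _).mp hq
        set d : L := x - c • a₀ with hd
        set d' : L := m - c' • a₀ with hd'
        have ex : x = c • a₀ + d := by rw [hd]; abel
        have em : m = c' • a₀ + d' := by rw [hd']; abel
        have e2 : ⁅x, m⁆ = c' • ⁅x, a₀⁆ + ⁅x, d'⁆ := by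
          conv_lhs => rw [em]
          rw [lie_add, lie_smul]
        have e3 : ⁅x, a₀⁆ = c • ⁅a₀, a₀⁆ + ⁅d, a₀⁆ := by
          conv_lhs => rw [ex]
          rw [add_lie, smul_lie]
        rw [e2, e3, lie_self, smul_zero, zero_add]
        set N : LieSubmodule F L L := ⁅(⊤ : LieIdeal F L), LieModule.lowerCentralSeries F L L 1⁆ with hN
        have t1 : ⁅x, d'⁆ ∈ N := LieSubmodule.lie_mem_lie (LieSubmodule.mem_top x) hdm
        have t2 : ⁅a₀, d⁆ ∈ N := LieSubmodule.lie_mem_lie (LieSubmodule.mem_top a₀) hdx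
        have t3 : ⁅d, a₀⁆ ∈ N := by
          rw [← lie_skew]
          exact N.neg_mem t2
        exact N.add_mem (N.smul_mem c' t3) t1
      have hchain : ∀ n : ℕ, LieModule.lowerCentralSeries F L L 1 ≤ LieModule.lowerCentralSeries F L L (n + 1) := by
        intro n
        induction n with
        | zero => exact le_refl _
        | succ n ih =>
          calc LieModule.lowerCentralSeries F L L 1 ≤ LieModule.lowerCentralSeries F L L 2 := claim
          _ = ⁅(⊤ : LieIdeal F L), LieModule.lowerCentralSeries F L L 1⁆ := by
              rw [show (2 : ℕ) = 1 + 1 from rfl, LieModule.lowerCentralSeries_succ]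
          _ ≤ ⁅(⊤ : LieIdeal F L), LieModule.lowerCentralSeries F L L (n + 1)⁆ :=
              LieSubmodule.mono_lie_right _ ih
          _ = LieModule.lowerCentralSeries F L L (n + 2) :=
              (LieModule.lowerCentralSeries_succ F L L (n + 1)).symm
      obtain ⟨k, hk⟩ := LieModule.IsNilpotent.nilpotent F L L
      cases k with
      | zero =>
        rw [LieModule.lowerCentralSeries_zero] at hk
        have : z ∈ (⊥ : LieSubmodule F L L) := hk ▸ LieSubmodule.mem_top z
        rw [LieSubmodule.mem_bot] at this
        exact hz0 this
      | succ n =>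
        have : LieModule.lowerCentralSeries F L L 1 = ⊥ := le_bot_iff.mp (hk ▸ hchain n)
        exact habel' ((LieModule.trivial_iff_lower_central_eq_bot F L L).mpr this)
    obtain ⟨h, hinterp, u, v, hne⟩ := exists_nonadditive_interp (K := F) (V := L ⧸ D) hdimV
    set T : L → L := fun x => x + h (D.mkQ x) • z with hTdef
    refine ⟨T, ?_, ?_⟩
    · intro x y
      obtain ⟨f₀, hf₀x, hf₀y⟩ := hinterp (D.mkQ x) (D.mkQ y)
      set f : L →ₗ[F] F := f₀ ∘ₗ D.mkQ with hf
      have hfb : ∀ a b : L, f ⁅a, b⁆ = 0 := by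
        intro a b
        rw [hf, LinearMap.comp_apply, hqbr, map_zero]
      have hc : 1 + f z ≠ 0 := by
        rw [hf, LinearMap.comp_apply, hqz, map_zero, add_zero]
        exact one_ne_zero
      obtain ⟨Φ, hΦ⟩ := exists_lieEquiv_shift z hzc f hfb hc
      refine ⟨Φ, ?_, ?_⟩
      · rw [hΦ x, hTdef]
        simp only [hf, LinearMap.comp_apply, hf₀x]
      · rw [hΦ y, hTdef]
        simp only [hf, LinearMap.comp_apply, hf₀y]
    · rintro ⟨Φ, hΦ⟩
      obtain ⟨x, hx⟩ := Submodule.mkQ_surjective D u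
      obtain ⟨y, hy⟩ := Submodule.mkQ_surjective D v
      have hadd : Φ (x + y) = Φ x + Φ y := map_add Φ.toLieHom x y
      have e : (x + y) + h (u + v) • z = (x + h u • z) + (y + h v • z) := by
        have e0 : D.mkQ (x + y) = u + v := by rw [map_add, hx, hy]
        calc (x + y) + h (u + v) • z = T (x + y) := by rw [hTdef]; simp only [e0]
        _ = Φ (x + y) := (hΦ _).symm
        _ = Φ x + Φ y := hadd
        _ = T x + T y := by rw [hΦ, hΦ]
        _ = (x + h u • z) + (y + h v • z) := by rw [hTdef]; simp only [hx, hy]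
      have e2 : (x + y) + h (u + v) • z = (x + y) + (h u • z + h v • z) := by
        rw [e]; abel
      have e3 : h (u + v) • z = h u • z + h v • z := add_left_cancel e2
      have e4 : (h (u + v) - (h u + h v)) • z = 0 := by
        rw [sub_smul, add_smul, e3, sub_self]
      rcases smul_eq_zero.mp e4 with h5 | h5
      · exact hne (sub_eq_zero.mp h5)
      · exact hz0 h5
end

section
/- Let L be a finite-dimensional abelian Lie algebra over an algebraically closed field F of characteristic zero with dim L ≥ 2. Then L admits a 2-local automorphism which is not an automorphism; that is, there exists a 2-local automorphism T : L → L for which no Lie algebra automorphism Φ of L satisfies Φ(x) = T(x) for all x ∈ L. -/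
section Aux

variable (F L : Type*) [Field F] [LieRing L] [LieAlgebra F L] [IsLieAbelian L]

/-- Any linear automorphism of an abelian Lie algebra is a Lie algebra automorphism. -/
def lieEquivOfLinear (e : L ≃ₗ[F] L) : L ≃ₗ⁅F⁆ L :=
  { e with
    map_lie' := by intro x y; simp [trivial_lie_zero] }

@[simp] theorem lieEquivOfLinear_apply (e : L ≃ₗ[F] L) (x : L) :
    lieEquivOfLinear F L e x = e x := rfl

end Aux

/-- Every finite-dimensional abelian Lie algebra of dimension at least 2 over an
algebraically closed field of characteristic zero admits a 2-local automorphism which is not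
an automorphism. -/
theorem abelian_exists_two_local_automorphism_not_automorphism
    (F L : Type*) [Field F] [IsAlgClosed F] [CharZero F]
    [LieRing L] [LieAlgebra F L] [FiniteDimensional F L]
    [IsLieAbelian L]
    (hdim : 2 ≤ Module.finrank F L) :
    ∃ T : L → L, Is2LocalAut F T ∧ ¬ ∃ Φ : L ≃ₗ⁅F⁆ L, ∀ x : L, Φ x = T x := by
  classical
  have hnt : Nontrivial L := Module.nontrivial_of_finrank_pos (R := F) (by omega)
  obtain ⟨e₁, he₁⟩ := exists_ne (0 : L)
  set p : Submodule F L := Submodule.span F {e₁} with hp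
  -- the 2-local automorphism
  set T : L → L := fun x => if x ∈ p then (2 : F) • x else x with hT
  -- a mixed-pair automorphism: given `y ∉ p`, there is a linear automorphism doubling
  -- everything in `p` and fixing `y`.
  have key : ∀ y : L, y ∉ p → ∃ Φ : L ≃ₗ⁅F⁆ L,
      (∀ x ∈ p, Φ x = (2 : F) • x) ∧ Φ y = y := by
    intro y hy
    have he₁y : e₁ ∉ Submodule.span F {y} := by
      intro h
      obtain ⟨c, hc⟩ := Submodule.mem_span_singleton.mp h
      have hc0 : c ≠ 0 := by rintro rfl; simp at hc; exact he₁ hc.symm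
      apply hy
      rw [Submodule.mem_span_singleton]
      exact ⟨c⁻¹, by rw [← hc, smul_smul, inv_mul_cancel₀ hc0, one_smul]⟩
    obtain ⟨f₀, hf₀, hf₀y⟩ :=
      (Submodule.span F {y}).exists_dual_map_eq_bot_of_notMem he₁y inferInstance
    set f : Module.Dual F L := (f₀ e₁)⁻¹ • f₀ with hf
    have hfe₁ : f e₁ = 1 := by simp [hf, inv_mul_cancel₀ hf₀]
    have hfy : f y = 0 := by
      have : f₀ y = 0 := by
        have : f₀ y ∈ (Submodule.span F {y}).map f₀ :=
          ⟨y, Submodule.mem_span_singleton_self y, rfl⟩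
        rwa [hf₀y, Submodule.mem_bot] at this
      simp [hf, this]
    set A : L →ₗ[F] L := LinearMap.id + f.smulRight e₁ with hA
    set B : L →ₗ[F] L := LinearMap.id - ((2 : F)⁻¹ • f).smulRight e₁ with hB
    have hAB : ∀ z, A (B z) = z := by
      intro z
      simp only [hA, hB, LinearMap.add_apply, LinearMap.sub_apply, LinearMap.id_apply,
        LinearMap.smulRight_apply, LinearMap.smul_apply, map_sub, map_smul, hfe₁,
        smul_eq_mul, mul_one]
      module
    have hBA : ∀ z, B (A z) = z := by
      intro z
      simp only [hA, hB, LinearMap.add_apply, LinearMap.sub_apply, LinearMap.id_apply,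
        LinearMap.smulRight_apply, LinearMap.smul_apply, map_add, map_smul, hfe₁,
        smul_eq_mul, mul_one]
      module
    refine ⟨lieEquivOfLinear F L (LinearEquiv.ofLinear A B (by ext z; exact hAB z)
      (by ext z; exact hBA z)), ?_, ?_⟩
    · intro x hx
      obtain ⟨c, hc⟩ := Submodule.mem_span_singleton.mp hx
      subst hc
      simp only [LinearEquiv.ofLinear_apply, lieEquivOfLinear_apply, hA,
        LinearMap.add_apply, LinearMap.id_apply, LinearMap.smulRight_apply, map_smul, hfe₁,
        smul_eq_mul, mul_one]
      module
    · simp [hA, hfy]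
  refine ⟨T, ?_, ?_⟩
  · intro x y
    by_cases hx : x ∈ p <;> by_cases hy : y ∈ p
    · -- both in span: double everything
      refine ⟨lieEquivOfLinear F L
        (LinearEquiv.smulOfNeZero F L 2 two_ne_zero), ?_, ?_⟩ <;>
        simp [hT, hx, hy]
    · obtain ⟨Φ, h1, h2⟩ := key y hy
      exact ⟨Φ, by simp [hT, hx, h1 x hx], by simp [hT, hy, h2]⟩
    · obtain ⟨Φ, h1, h2⟩ := key x hx
      exact ⟨Φ, by simp [hT, hx, h2], by simp [hT, hy, h1 y hy]⟩
    · exact ⟨LieEquiv.refl, by simp [hT, hx], by simp [hT, hy]⟩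
  · rintro ⟨Φ, hΦ⟩
    -- find e₂ ∉ p
    have hpne : p ≠ ⊤ := by
      intro h
      have h1 : Module.finrank F p = 1 := finrank_span_singleton he₁
      rw [h, finrank_top] at h1
      omega
    obtain ⟨e₂, he₂⟩ : ∃ e₂, e₂ ∉ p := by
      by_contra h
      push_neg at h
      exact hpne (by ext z; simp [h z])
    have hsum : e₁ + e₂ ∉ p := by
      intro h
      have : e₂ = e₁ + e₂ - e₁ := by abel
      exact he₂ (this ▸ sub_mem h (Submodule.mem_span_singleton_self e₁))
    have h1 : Φ e₁ = (2 : F) • e₁ := by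
      rw [hΦ]; simp [hT, show e₁ ∈ p from Submodule.mem_span_singleton_self e₁]
    have h2 : Φ e₂ = e₂ := by rw [hΦ]; simp [hT, he₂]
    have h3 : Φ (e₁ + e₂) = e₁ + e₂ := by rw [hΦ]; simp [hT, hsum]
    have h4 : Φ (e₁ + e₂) = (2 : F) • e₁ + e₂ := by
      have := Φ.toLieHom.map_add e₁ e₂
      change Φ (e₁ + e₂) = Φ e₁ + Φ e₂ at this
      rw [this, h1, h2]
    rw [h3, two_smul] at h4
    have h5 : e₁ + e₂ = (e₁ + e₁) + e₂ := by rw [h4]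
    have h6 : e₁ = e₁ + e₁ := add_right_cancel h5
    exact he₁ (left_eq_add.mp h6)
end
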